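/- In a Jacobi algebra, the triple iterated commutator [i,[i,[i,d]]] vanishes; consequently, with φ₁ = i and φₙ = 0 for n ≥ 2, the trivialization equation e^{φ(z)} d e^{−φ(z)} = d + Δ₁z + Δ₂z² holds, where Δ₁ = [i,d] and Δ₂ = −ji = (1/2)[i,[i,d]]. -/

import Mathlib

/-- Graded commutativity with Koszul signs. -/
def GradedComm {A : Type*} [Ring A] [Algebra ℚ A] (𝒜 : ℤ → Submodule ℚ A) : Prop :=
  ∀ (m n : ℤ) (x y : A), x ∈ 𝒜 m → y ∈ 𝒜 n → x * y = ((-1 : ℚ) ^ (m * n)) • (y * x)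

/-- `D` is homogeneous of degree `k` with respect to the grading `𝒜`. -/
def Homog {A : Type*} [Ring A] [Algebra ℚ A] (𝒜 : ℤ → Submodule ℚ A) (k : ℤ)
    (D : Module.End ℚ A) : Prop :=
  ∀ (m : ℤ) (x : A), x ∈ 𝒜 m → D x ∈ 𝒜 (m + k)

/-- Differential operator of order `≤ 1` (the shuffle-sum definition for `n = 1`). -/
def IsDO1 {A : Type*} [Ring A] [Algebra ℚ A] (𝒜 : ℤ → Submodule ℚ A)
    (D : Module.End ℚ A) : Prop :=
  ∀ (m n : ℤ) (x y : A), x ∈ 𝒜 m → y ∈ 𝒜 n →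
    D (x * y) = D x * y + ((-1 : ℚ) ^ (m * n)) • (D y * x)

/-- Differential operator of order `≤ 2` (the shuffle-sum definition for `n = 2`). -/
def IsDO2 {A : Type*} [Ring A] [Algebra ℚ A] (𝒜 : ℤ → Submodule ℚ A)
    (D : Module.End ℚ A) : Prop :=
  ∀ (a b c : ℤ) (x y z : A), x ∈ 𝒜 a → y ∈ 𝒜 b → z ∈ 𝒜 c →
    D (x * y) * z + ((-1 : ℚ) ^ (b * c)) • (D (x * z) * y)
      + ((-1 : ℚ) ^ (a * (b + c))) • (D (y * z) * x)
    = D x * (y * z) + ((-1 : ℚ) ^ (a * b)) • (D y * (x * z))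
      + ((-1 : ℚ) ^ (c * (a + b))) • (D z * (x * y)) + D (x * y * z)

section JacobiAux
variable {R : Type*} [Ring R] [Algebra ℚ R]

private lemma jacobi_key2 (i d D1 D2 : R)
    (h1 : i * d = d * i + D1) (h2 : i * D1 = D1 * i + (2:ℚ) • D2)
    (h3 : i * D2 = D2 * i) (m : ℕ) :
    i ^ (m+2) * d = d * i ^ (m+2) + ((m:ℚ)+2) • (D1 * i ^ (m+1))
      + (((m:ℚ)+2)*((m:ℚ)+1)) • (D2 * i ^ m) := by
  induction m with
  | zero =>
    have e : i^2*d = i*(i*d) := by rw [pow_two, mul_assoc]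
    rw [e, h1, mul_add, ← mul_assoc, h1, h2]
    simp only [add_mul, mul_assoc, pow_succ, pow_zero, one_mul, mul_one, Nat.cast_zero]
    match_scalars <;> ring
  | succ m ih =>
    have e : i^(m+3)*d = i*(i^(m+2)*d) := by rw [pow_succ', mul_assoc]
    rw [e, ih, mul_add, mul_add, mul_smul_comm, mul_smul_comm,
        ← mul_assoc, ← mul_assoc, ← mul_assoc, h1, h2, h3]
    simp only [add_mul, smul_mul_assoc, mul_assoc, ← pow_succ']
    match_scalars <;> ring

private lemma jacobi_exp_inv (i : R) :
    (PowerSeries.mk fun n => ((n.factorial : ℚ)⁻¹) • i ^ n) *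
      (PowerSeries.mk fun n => ((n.factorial : ℚ)⁻¹) • (-i) ^ n) = 1 := by
  ext n
  rw [PowerSeries.coeff_mul]
  rw [Finset.Nat.sum_antidiagonal_eq_sum_range_succ_mk]
  have hterm : ∀ k ∈ Finset.range (n+1),
      (PowerSeries.coeff k (PowerSeries.mk fun n => ((n.factorial : ℚ)⁻¹) • i ^ n)) *
      (PowerSeries.coeff (n-k) (PowerSeries.mk fun n => ((n.factorial : ℚ)⁻¹) • (-i) ^ n))
      = ((-1:ℚ)^(n-k) * ((k.factorial:ℚ)⁻¹ * (((n-k).factorial:ℚ)⁻¹))) • i ^ n := by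
    intro k hk
    have hk' : k ≤ n := Nat.lt_succ_iff.mp (Finset.mem_range.mp hk)
    rw [PowerSeries.coeff_mk, PowerSeries.coeff_mk]
    have : (-i) ^ (n-k) = ((-1:ℚ)^(n-k)) • i ^ (n-k) := by
      rw [show -i = (-1:ℚ) • i by simp, smul_pow]
    rw [this]
    simp only [smul_mul_assoc, mul_smul_comm, smul_smul]
    rw [← pow_add, Nat.add_sub_cancel' hk']
    ring_nf
  rw [Finset.sum_congr rfl hterm, ← Finset.sum_smul]
  have hS : (∑ k ∈ Finset.range (n+1),
      (-1:ℚ)^(n-k) * ((k.factorial:ℚ)⁻¹ * (((n-k).factorial:ℚ)⁻¹)))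
      = ((n.factorial:ℚ))⁻¹ * (0:ℚ)^n := by
    rw [show (0:ℚ) = 1 + (-1) by ring, add_pow, Finset.mul_sum]
    refine Finset.sum_congr rfl fun k hk => ?_
    have hk' : k ≤ n := Nat.lt_succ_iff.mp (Finset.mem_range.mp hk)
    have hfact : ((n.choose k : ℚ)) * (k.factorial : ℚ) * ((n-k).factorial : ℚ)
        = (n.factorial : ℚ) := by
      exact_mod_cast congrArg (Nat.cast : ℕ → ℚ) (Nat.choose_mul_factorial_mul_factorial hk')
    have h1 : (k.factorial : ℚ) ≠ 0 := Nat.cast_ne_zero.mpr k.factorial_ne_zero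
    have h2 : (((n-k).factorial : ℚ)) ≠ 0 := Nat.cast_ne_zero.mpr (n-k).factorial_ne_zero
    have h3 : ((n.factorial : ℚ)) ≠ 0 := Nat.cast_ne_zero.mpr n.factorial_ne_zero
    field_simp
    linear_combination (-1:ℚ) * hfact
  rw [hS]
  rcases Nat.eq_zero_or_pos n with h | h
  · subst h; simp
  · rw [zero_pow (Nat.pos_iff_ne_zero.mp h)]
    simp [PowerSeries.coeff_one, Nat.pos_iff_ne_zero.mp h]

private lemma jacobi_comm_series (i d D1 D2 : R)
    (h1 : i * d = d * i + D1) (h2 : i * D1 = D1 * i + (2:ℚ) • D2)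
    (h3 : i * D2 = D2 * i) :
    (PowerSeries.mk fun n => ((n.factorial : ℚ)⁻¹) • i ^ n) * PowerSeries.C (R := R) d
      = (PowerSeries.C (R := R) d + PowerSeries.C (R := R) D1 * PowerSeries.X
          + PowerSeries.C (R := R) D2 * PowerSeries.X ^ 2) *
        (PowerSeries.mk fun n => ((n.factorial : ℚ)⁻¹) • i ^ n) := by
  have key2 := jacobi_key2 i d D1 D2 h1 h2 h3
  set E := (PowerSeries.mk fun n => ((n.factorial : ℚ)⁻¹) • i ^ n) with hE
  ext n
  rw [PowerSeries.coeff_mul_C, PowerSeries.coeff_mk]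
  rw [add_mul, add_mul, mul_assoc, mul_assoc, sq, mul_assoc]
  rw [map_add, map_add, PowerSeries.coeff_C_mul, PowerSeries.coeff_C_mul,
      PowerSeries.coeff_C_mul]
  match n with
  | 0 =>
    simp [hE, PowerSeries.coeff_mk]
  | 1 =>
    rw [PowerSeries.coeff_succ_X_mul, PowerSeries.coeff_succ_X_mul,
        PowerSeries.coeff_zero_X_mul]
    simp only [hE, PowerSeries.coeff_mk]
    simp [h1, smul_mul_assoc, mul_smul_comm]
  | (m+2) =>
    rw [PowerSeries.coeff_succ_X_mul, PowerSeries.coeff_succ_X_mul,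
        PowerSeries.coeff_succ_X_mul]
    simp only [hE, PowerSeries.coeff_mk]
    rw [smul_mul_assoc, key2 m, mul_smul_comm, mul_smul_comm, mul_smul_comm]
    have f2 : (((m+2).factorial : ℚ)) = ((m:ℚ)+2) * (((m+1).factorial : ℚ)) := by
      rw [show m+2 = (m+1)+1 from rfl, Nat.factorial_succ]; push_cast; ring
    have f1 : (((m+1).factorial : ℚ)) = ((m:ℚ)+1) * ((m.factorial : ℚ)) := by
      rw [Nat.factorial_succ]; push_cast; ring
    have h1' : ((m.factorial : ℚ)) ≠ 0 := Nat.cast_ne_zero.mpr m.factorial_ne_zero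
    have hm1 : ((m:ℚ)+1) ≠ 0 := by positivity
    have hm2 : ((m:ℚ)+2) ≠ 0 := by positivity
    match_scalars
    · rfl
    · rw [f2, f1]; field_simp
    · rw [f2, f1]; field_simp

end JacobiAux

/-- In a Jacobi algebra the triple iterated commutator `[i,[i,[i,d]]]`
vanishes; consequently, with `φ₁ = i` and `φₙ = 0` for `n ≥ 2`, the trivialization equation
`e^{φ(z)} d e^{−φ(z)} = d + Δ₁ z + Δ₂ z²` holds in `End(A)[[z]]`, where `Δ₁ = [i,d]` and
`Δ₂ = −ji = (1/2)[i,[i,d]]`.  (Since `i` has even degree, its bracket is the ordinary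
commutator.) -/
theorem jacobi_trivialization {A : Type*} [Ring A] [Algebra ℚ A]
    (𝒜 : ℤ → Submodule ℚ A) (hcomm : GradedComm 𝒜)
    (d : Module.End ℚ A) (hd_deg : Homog 𝒜 1 d) (hd_leib : IsDO1 𝒜 d) (hdd : d * d = 0)
    (i : Module.End ℚ A) (hi_deg : Homog 𝒜 (-2) i) (hi_ord : IsDO2 𝒜 i)
    (j : Module.End ℚ A) (hj_deg : Homog 𝒜 (-1) j) (hj_ord : IsDO1 𝒜 j)
    (r1 : i * (i * d - d * i) - (i * d - d * i) * i = -(2 • (j * i)))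
    (r2 : i * j - j * i = 0)
    (r3 : j * (i * d - d * i) + (i * d - d * i) * j = 0)
    (r4 : j * j = 0) :
    (i * (i * (i * d - d * i) - (i * d - d * i) * i)
      - (i * (i * d - d * i) - (i * d - d * i) * i) * i = 0) ∧
    (-(j * i) = (2 : ℚ)⁻¹ • (i * (i * d - d * i) - (i * d - d * i) * i)) ∧
    (PowerSeries.mk (fun n => ((n.factorial : ℚ)⁻¹) • i ^ n) *
        PowerSeries.C (R := Module.End ℚ A) d *
        PowerSeries.mk (fun n => ((n.factorial : ℚ)⁻¹) • (-i) ^ n)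
      = PowerSeries.C (R := Module.End ℚ A) d +
        PowerSeries.C (R := Module.End ℚ A) (i * d - d * i) * PowerSeries.X +
        PowerSeries.C (R := Module.End ℚ A) (-(j * i)) * PowerSeries.X ^ 2) := by
  have hij : i * j = j * i := sub_eq_zero.mp r2
  have r1' : i * (i * d - d * i) - (i * d - d * i) * i = -((2:ℚ) • (j * i)) := by
    rw [r1, ← Nat.cast_smul_eq_nsmul ℚ]; norm_num
  have h1 : i * d = d * i + (i * d - d * i) := by noncomm_ring
  have h2 : i * (i * d - d * i) = (i * d - d * i) * i + (2:ℚ) • (-(j * i)) := by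
    have := r1'
    rw [sub_eq_iff_eq_add] at this
    rw [this, smul_neg]
    abel
  have h3 : i * (-(j * i)) = (-(j * i)) * i := by
    have e : i * (j * i) = j * i * i := by rw [← mul_assoc, hij]
    ext x
    have := LinearMap.congr_fun e x
    simpa using this
  refine ⟨?_, ?_, ?_⟩
  · rw [r1]
    have h2s : (2 • (j * i) : Module.End ℚ A) = j * i + j * i := two_smul ℕ _
    rw [h2s]
    have e : i * (j * i) = j * i * i := by rw [← mul_assoc, hij]
    ext x
    have := LinearMap.congr_fun e x
    simp at this ⊢
    rw [this]
    abel
  · rw [r1', smul_neg, smul_smul]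
    norm_num
  · have hinv := jacobi_exp_inv (R := Module.End ℚ A) i
    have hcs := jacobi_comm_series i d (i * d - d * i) (-(j * i)) h1 h2 h3
    calc (PowerSeries.mk fun n => ((n.factorial : ℚ)⁻¹) • i ^ n) *
            PowerSeries.C (R := Module.End ℚ A) d *
            (PowerSeries.mk fun n => ((n.factorial : ℚ)⁻¹) • (-i) ^ n)
        = ((PowerSeries.C (R := Module.End ℚ A) d +
            PowerSeries.C (R := Module.End ℚ A) (i * d - d * i) * PowerSeries.X +
            PowerSeries.C (R := Module.End ℚ A) (-(j * i)) * PowerSeries.X ^ 2) *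
            (PowerSeries.mk fun n => ((n.factorial : ℚ)⁻¹) • i ^ n)) *
            (PowerSeries.mk fun n => ((n.factorial : ℚ)⁻¹) • (-i) ^ n) := by rw [hcs]
      _ = _ := by rw [mul_assoc, hinv, mul_one]
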